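/- With notation as in the Apéry set scaling result, the p-genera satisfy n_p(A) = d·n_p(A_d) + (d-1)(a_1-1)/2. -/

import Mathlib

open Finset

noncomputable def numRep' (a₁ : ℕ) {k : ℕ} (b : Fin k → ℕ) (n : ℕ) : ℕ :=
  Set.ncard {xy : ℕ × (Fin k → ℕ) | a₁ * xy.1 + ∑ i, b i * xy.2 i = n}

def Sp' (p a₁ : ℕ) {k : ℕ} (b : Fin k → ℕ) : Set ℕ := {n : ℕ | p < numRep' a₁ b n}



lemma bezout {ι : Type*} [DecidableEq ι] (s : Finset ι) (c : ι → ℕ) :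
    ∃ z : ι → ℤ, ((s.gcd c : ℕ) : ℤ) = ∑ i ∈ s, z i * c i := by
  induction s using Finset.induction with
  | empty => exact ⟨fun _ => 0, by simp⟩
  | insert a s ha ih =>
    obtain ⟨z, hz⟩ := ih
    refine ⟨fun i => if i = a then Nat.gcdA (c a) (s.gcd c) else
      Nat.gcdB (c a) (s.gcd c) * z i, ?_⟩
    rw [Finset.gcd_insert, Finset.sum_insert ha]
    have h1 : ((GCDMonoid.gcd (c a) (s.gcd c) : ℕ) : ℤ) = ((Nat.gcd (c a) (s.gcd c) : ℕ) : ℤ) := rfl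
    rw [h1, Nat.gcd_eq_gcd_ab]
    have h2 : ∑ i ∈ s, (if i = a then Nat.gcdA (c a) (s.gcd c) else
        Nat.gcdB (c a) (s.gcd c) * z i) * (c i : ℤ)
        = Nat.gcdB (c a) (s.gcd c) * ∑ i ∈ s, z i * c i := by
      rw [Finset.mul_sum]
      refine Finset.sum_congr rfl (fun i hi => ?_)
      rw [if_neg (by rintro rfl; exact ha hi)]; ring
    rw [h2, ← hz]
    ring_nf
    simp [mul_comm]


lemma residue_real {k : ℕ} (a₁ : ℕ) (ha₁ : 0 < a₁) (c : Fin k → ℕ)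
    (hcop : Nat.Coprime a₁ (Finset.univ.gcd c)) (r : ZMod a₁) :
    ∃ m : ℕ, (∃ y : Fin k → ℕ, ∑ i, c i * y i = m) ∧ (m : ZMod a₁) = r := by
  haveI : NeZero a₁ := ⟨ha₁.ne'⟩
  set d' := Finset.univ.gcd c with hd'
  obtain ⟨z, hz⟩ := bezout Finset.univ c
  have hu : IsUnit (d' : ZMod a₁) := (ZMod.isUnit_iff_coprime d' a₁).mpr hcop.symm
  set s : ZMod a₁ := hu.unit⁻¹ * r with hs
  have hsr : (d' : ZMod a₁) * s = r := by
    have h1 : (d' : ZMod a₁) * ↑hu.unit⁻¹ = 1 := by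
      have h2 := hu.unit.mul_inv
      rwa [hu.unit_spec] at h2
    rw [hs, ← mul_assoc, h1, one_mul]
  set t : ℕ := s.val with ht
  set B : ℕ := t * (Finset.univ.sup fun i => (z i).natAbs) with hB
  have hnn : ∀ i : Fin k, 0 ≤ (t : ℤ) * z i + a₁ * B := by
    intro i
    have h1 : ((z i).natAbs : ℤ) ≤ ((Finset.univ.sup fun i => (z i).natAbs : ℕ) : ℤ) :=
      Nat.cast_le.mpr (Finset.le_sup (f := fun i => (z i).natAbs) (Finset.mem_univ i))
    have h2 : -z i ≤ ((z i).natAbs : ℤ) := by omega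
    have h3 : (B : ℤ) = (t : ℤ) * ((Finset.univ.sup fun i => (z i).natAbs : ℕ) : ℤ) := by
      push_cast [hB]; ring
    have h4 : (1 : ℤ) ≤ a₁ := by exact_mod_cast ha₁
    have h5 : (0 : ℤ) ≤ t := Int.natCast_nonneg t
    have h6 : (0 : ℤ) ≤ ((z i).natAbs : ℤ) := Int.natCast_nonneg _
    nlinarith [mul_le_mul_of_nonneg_left h1 h5, mul_le_mul_of_nonneg_left h2 h5]
  set w : Fin k → ℕ := fun i => ((t : ℤ) * z i + a₁ * B).toNat with hw
  refine ⟨∑ i, c i * w i, ⟨w, rfl⟩, ?_⟩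
  have hwc : ∀ i : Fin k, ((w i : ℕ) : ℤ) = (t : ℤ) * z i + a₁ * B := by
    intro i; rw [hw]; simp [Int.toNat_of_nonneg (hnn i)]
  have hcast : ((∑ i, c i * w i : ℕ) : ℤ) = (t : ℤ) * d' + a₁ * (B * ∑ i, (c i : ℤ)) := by
    push_cast
    rw [Finset.sum_congr rfl fun i (_ : i ∈ Finset.univ) => by rw [hwc i]]
    rw [hz]
    simp only [Finset.mul_sum]
    rw [← Finset.sum_add_distrib]
    exact Finset.sum_congr rfl fun i _ => by ring
  have hQ : ((∑ i, c i * w i : ℕ) : ZMod a₁) = (((∑ i, c i * w i : ℕ) : ℤ) : ZMod a₁) := by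
    push_cast; ring
  rw [hQ, hcast]
  push_cast
  simp only [ZMod.natCast_self, zero_mul, mul_zero, add_zero, zero_add]
  rw [show ((t : ℕ) : ZMod a₁) = s from ZMod.natCast_rightInverse s]
  rw [mul_comm]
  exact hsr


lemma repSet_finite {k : ℕ} (a₁ : ℕ) (ha₁ : 0 < a₁) (c : Fin k → ℕ) (hc : ∀ i, 0 < c i)
    (n : ℕ) : {xy : ℕ × (Fin k → ℕ) | a₁ * xy.1 + ∑ i, c i * xy.2 i = n}.Finite := by
  apply Set.Finite.subset (Set.Finite.prod (Set.finite_Iic n)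
    (Set.Finite.pi fun _ : Fin k => Set.finite_Iic n))
  rintro ⟨x, y⟩ hxy
  simp only [Set.mem_setOf_eq] at hxy
  constructor
  · have h0 : x ≤ a₁ * x := Nat.le_mul_of_pos_left x ha₁
    have : x ≤ n := by omega
    exact Set.mem_Iic.mpr this
  · intro i _
    have h1 : c i * y i ≤ ∑ j, c j * y j :=
      Finset.single_le_sum (f := fun j => c j * y j) (fun j _ => Nat.zero_le _)
        (Finset.mem_univ i)
    have h2 : y i ≤ c i * y i := Nat.le_mul_of_pos_left _ (hc i)
    have : y i ≤ n := by omega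
    exact Set.mem_Iic.mpr this

lemma gaps_finite {k : ℕ} (p a₁ : ℕ) (hk : 0 < k) (ha₁ : 0 < a₁) (c : Fin k → ℕ)
    (hc : ∀ i, 0 < c i) (hcop : Nat.Coprime a₁ (Finset.univ.gcd c)) :
    {n : ℕ | ¬ p < numRep' a₁ c n}.Finite := by
  haveI : NeZero a₁ := ⟨ha₁.ne'⟩
  have hM := fun r : ZMod a₁ => residue_real a₁ ha₁ c hcop r
  choose M hMy hMr using hM
  set i₀ : Fin k := ⟨0, hk⟩ with hi₀
  set N₀ : ℕ := Finset.univ.sup M with hN₀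
  set N : ℕ := N₀ + a₁ + p * a₁ * c i₀ with hN
  apply Set.Finite.subset (Set.finite_Iio N)
  intro n hn
  simp only [Set.mem_setOf_eq] at hn
  by_contra hnN
  apply hn
  have hnN' : N ≤ n := by simpa using hnN
  set n' : ℕ := n - p * a₁ * c i₀ with hn'
  have hsplit : n' + p * a₁ * c i₀ = n := by omega
  have hn'ge : N₀ + a₁ ≤ n' := by omega
  set r : ZMod a₁ := (n' : ZMod a₁) with hr
  obtain ⟨y, hy⟩ := hMy r
  have hmle : M r ≤ N₀ := Finset.le_sup (Finset.mem_univ r)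
  have hdvd : a₁ ∣ n' - M r := by
    rw [← ZMod.natCast_eq_zero_iff]
    rw [Nat.cast_sub (by omega)]
    rw [hMr r, hr]
    ring
  obtain ⟨x₁, hx₁⟩ := hdvd
  have hrep : n' = a₁ * x₁ + M r := by omega
  -- the p+1 representations
  set pair : ℕ → ℕ × (Fin k → ℕ) := fun j =>
    (x₁ + j * c i₀, Function.update y i₀ (y i₀ + (p - j) * a₁)) with hpair
  have hupd : ∀ j, ∑ i, c i * Function.update y i₀ (y i₀ + (p - j) * a₁) i
      = (∑ i, c i * y i) + c i₀ * ((p - j) * a₁) := by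
    intro j
    have : ∀ i : Fin k, c i * Function.update y i₀ (y i₀ + (p - j) * a₁) i
        = c i * y i + (if i = i₀ then c i₀ * ((p - j) * a₁) else 0) := by
      intro i
      by_cases h : i = i₀
      · subst h; rw [Function.update_self, if_pos rfl]; ring
      · rw [Function.update_of_ne h, if_neg h]; ring
    rw [Finset.sum_congr rfl fun i _ => this i, Finset.sum_add_distrib,
      Finset.sum_ite_eq' Finset.univ i₀ fun _ => c i₀ * ((p - j) * a₁)]
    simp
  have hmem : ∀ j ≤ p, pair j ∈
      {xy : ℕ × (Fin k → ℕ) | a₁ * xy.1 + ∑ i, c i * xy.2 i = n} := by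
    intro j hj
    simp only [hpair, Set.mem_setOf_eq]
    rw [hupd j, hy]
    have : a₁ * (x₁ + j * c i₀) + (M r + c i₀ * ((p - j) * a₁))
        = (a₁ * x₁ + M r) + (j + (p - j)) * a₁ * c i₀ := by ring
    rw [this, ← hrep]
    have : j + (p - j) = p := by omega
    rw [this, hsplit]
  set t : Finset (ℕ × (Fin k → ℕ)) := (Finset.range (p + 1)).image pair with htdef
  have htcard : t.card = p + 1 := by
    rw [htdef, Finset.card_image_of_injOn, Finset.card_range]
    intro j _ j' _ hjj'
    have : x₁ + j * c i₀ = x₁ + j' * c i₀ := congrArg Prod.fst hjj'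
    have hci₀ := hc i₀
    exact Nat.eq_of_mul_eq_mul_right hci₀ (by omega)
  have hsub : ↑t ⊆ {xy : ℕ × (Fin k → ℕ) | a₁ * xy.1 + ∑ i, c i * xy.2 i = n} := by
    intro xy hxy
    simp only [htdef, Finset.coe_image, Finset.coe_range, Set.mem_image] at hxy
    obtain ⟨j, hj, rfl⟩ := hxy
    exact hmem j (by simpa using Nat.lt_succ_iff.mp (by simpa using hj))
  calc p < p + 1 := Nat.lt_succ_self p
    _ = Set.ncard (↑t : Set (ℕ × (Fin k → ℕ))) := by rw [Set.ncard_coe_finset, htcard]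
    _ ≤ numRep' a₁ c n := Set.ncard_le_ncard hsub (repSet_finite a₁ ha₁ c hc n)


/-- canonical least x-residue -/
noncomputable def x0 (d a₁ n : ℕ) : ℕ := ((n : ZMod d) * (a₁ : ZMod d)⁻¹).val

lemma x0_lt {d : ℕ} (hd : 0 < d) (a₁ n : ℕ) : x0 d a₁ n < d := by
  haveI : NeZero d := ⟨hd.ne'⟩
  exact ZMod.val_lt _

lemma x0_natCast {d : ℕ} (hd : 0 < d) (a₁ n : ℕ) :
    ((x0 d a₁ n : ℕ) : ZMod d) = (n : ZMod d) * (a₁ : ZMod d)⁻¹ := by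
  haveI : NeZero d := ⟨hd.ne'⟩
  exact ZMod.natCast_rightInverse _

lemma x0_cast {d a₁ : ℕ} (hd : 0 < d) (hcop : Nat.Coprime a₁ d) (n : ℕ) :
    ((a₁ * x0 d a₁ n : ℕ) : ZMod d) = (n : ZMod d) := by
  push_cast
  rw [x0_natCast hd]
  rw [show (a₁ : ZMod d) * ((n : ZMod d) * (a₁ : ZMod d)⁻¹)
    = (n : ZMod d) * ((a₁ : ZMod d) * (a₁ : ZMod d)⁻¹) by ring]
  rw [ZMod.coe_mul_inv_eq_one a₁ hcop, mul_one]

lemma x0_of {d a₁ : ℕ} (hd : 0 < d) (hcop : Nat.Coprime a₁ d) (m x₀ : ℕ) (hx₀ : x₀ < d) :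
    x0 d a₁ (d * m + a₁ * x₀) = x₀ := by
  haveI : NeZero d := ⟨hd.ne'⟩
  unfold x0
  have h1 : ((d * m + a₁ * x₀ : ℕ) : ZMod d) = (a₁ : ZMod d) * (x₀ : ZMod d) := by
    push_cast [ZMod.natCast_self]; ring
  rw [h1, show (a₁ : ZMod d) * (x₀ : ZMod d) * (a₁ : ZMod d)⁻¹
    = (x₀ : ZMod d) * ((a₁ : ZMod d) * (a₁ : ZMod d)⁻¹) by ring,
    ZMod.coe_mul_inv_eq_one a₁ hcop, mul_one]
  exact ZMod.val_cast_of_lt hx₀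

lemma rep_decomp {k d a₁ : ℕ} {b : Fin k → ℕ} (hd : 0 < d) (hcop : Nat.Coprime a₁ d)
    (hdvd : ∀ i, d ∣ b i) {n x : ℕ} {y : Fin k → ℕ}
    (hxy : a₁ * x + ∑ i, b i * y i = n) :
    ∃ u, x = x0 d a₁ n + d * u := by
  haveI : NeZero d := ⟨hd.ne'⟩
  have hb0 : ∀ i, ((b i : ℕ) : ZMod d) = 0 := fun i =>
    (ZMod.natCast_eq_zero_iff _ _).mpr (hdvd i)
  have h1 : ((n : ℕ) : ZMod d) = (a₁ : ZMod d) * (x : ZMod d) := by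
    rw [← hxy]
    push_cast
    rw [Finset.sum_congr rfl fun i (_ : i ∈ Finset.univ) => by rw [hb0 i, zero_mul]]
    simp
  have h2 : ((x : ℕ) : ZMod d) = ((x0 d a₁ n : ℕ) : ZMod d) := by
    rw [x0_natCast hd, h1]
    rw [show (a₁ : ZMod d) * (x : ZMod d) * (a₁ : ZMod d)⁻¹
      = (x : ZMod d) * ((a₁ : ZMod d) * (a₁ : ZMod d)⁻¹) by ring,
      ZMod.coe_mul_inv_eq_one a₁ hcop, mul_one]
  have h3 : x ≡ x0 d a₁ n [MOD d] := (ZMod.natCast_eq_natCast_iff _ _ _).mp h2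
  have h4 : x0 d a₁ n < d := x0_lt hd a₁ n
  have h5 : x % d = x0 d a₁ n := by
    have h5' : x % d = x0 d a₁ n % d := h3
    rwa [Nat.mod_eq_of_lt h4] at h5'
  have h6 : x0 d a₁ n ≤ x := h5 ▸ Nat.mod_le x d
  refine ⟨(x - x0 d a₁ n) / d, ?_⟩
  have h7 : d ∣ x - x0 d a₁ n := (Nat.modEq_iff_dvd' h6).mp h3.symm
  rw [Nat.mul_div_cancel' h7]
  omega

lemma numRep_scale {k d a₁ : ℕ} {b : Fin k → ℕ} (hd : 0 < d) (hcop : Nat.Coprime a₁ d)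
    (hdvd : ∀ i, d ∣ b i) (m x₀ : ℕ) (hx₀ : x₀ < d) :
    numRep' a₁ b (d * m + a₁ * x₀) = numRep' a₁ (fun i => b i / d) m := by
  have hE : {xy : ℕ × (Fin k → ℕ) | a₁ * xy.1 + ∑ i, b i * xy.2 i = d * m + a₁ * x₀}
      = (fun uy : ℕ × (Fin k → ℕ) => (x₀ + d * uy.1, uy.2)) ''
        {uy : ℕ × (Fin k → ℕ) | a₁ * uy.1 + ∑ i, (b i / d) * uy.2 i = m} := by
    ext ⟨x, y⟩
    simp only [Set.mem_setOf_eq, Set.mem_image, Prod.mk.injEq, Prod.exists]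
    constructor
    · intro hxy
      obtain ⟨u, hu⟩ := rep_decomp hd hcop hdvd hxy
      rw [x0_of hd hcop m x₀ hx₀] at hu
      refine ⟨u, y, ?_, hu.symm, rfl⟩
      have hsum : ∑ i, b i * y i = d * ∑ i, (b i / d) * y i := by
        rw [Finset.mul_sum]
        refine Finset.sum_congr rfl fun i _ => ?_
        rw [← mul_assoc, Nat.mul_div_cancel' (hdvd i)]
      rw [hu, hsum] at hxy
      have h' : a₁ * x₀ + d * (a₁ * u + ∑ i, (b i / d) * y i)
          = a₁ * x₀ + d * m := by
        calc a₁ * x₀ + d * (a₁ * u + ∑ i, (b i / d) * y i)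
            = a₁ * (x₀ + d * u) + d * ∑ i, (b i / d) * y i := by ring
          _ = d * m + a₁ * x₀ := hxy
          _ = a₁ * x₀ + d * m := by ring
      exact Nat.eq_of_mul_eq_mul_left hd (Nat.add_left_cancel h')
    · rintro ⟨u, y', huy, rfl, rfl⟩
      have hsum : ∑ i, b i * y' i = d * ∑ i, (b i / d) * y' i := by
        rw [Finset.mul_sum]
        refine Finset.sum_congr rfl fun i _ => ?_
        rw [← mul_assoc, Nat.mul_div_cancel' (hdvd i)]
      rw [hsum]
      calc a₁ * (x₀ + d * u) + d * ∑ i, (b i / d) * y' i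
          = d * (a₁ * u + ∑ i, (b i / d) * y' i) + a₁ * x₀ := by ring
        _ = d * m + a₁ * x₀ := by rw [huy]
  unfold numRep'
  rw [hE, Set.ncard_image_of_injective]
  rintro ⟨u, y⟩ ⟨u', y'⟩ h
  simp only [Prod.mk.injEq] at h
  obtain ⟨h1, h2⟩ := h
  have : u = u' := Nat.eq_of_mul_eq_mul_left hd (by omega)
  simp [this, h2]

lemma numRep_zero {k d a₁ : ℕ} {b : Fin k → ℕ} (hd : 0 < d) (hcop : Nat.Coprime a₁ d)
    (hdvd : ∀ i, d ∣ b i) {n : ℕ} (hlt : n < a₁ * x0 d a₁ n) :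
    numRep' a₁ b n = 0 := by
  unfold numRep'
  convert Set.ncard_empty (ℕ × (Fin k → ℕ))
  ext ⟨x, y⟩
  simp only [Set.mem_setOf_eq, Set.mem_empty_iff_false, iff_false]
  intro hxy
  obtain ⟨u, hu⟩ := rep_decomp hd hcop hdvd hxy
  have hxx : x0 d a₁ n ≤ x := by omega
  have := Nat.mul_le_mul_left a₁ hxx
  omega


lemma sum_floor_div {d a₁ : ℕ} (hd : 0 < d) (ha₁ : 0 < a₁) (hcop : Nat.Coprime a₁ d) :
    2 * ∑ x ∈ Finset.range d, (a₁ * x / d) = (d - 1) * (a₁ - 1) := by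
  set S := ∑ x ∈ Finset.range d, (a₁ * x / d) with hS
  set T := ∑ x ∈ Finset.range d, x with hT
  -- the residues a₁ * x % d form a permutation of range d
  have himg : (Finset.range d).image (fun x => a₁ * x % d) = Finset.range d := by
    apply Finset.eq_of_subset_of_card_le
    · intro r hr
      simp only [Finset.mem_image, Finset.mem_range] at hr ⊢
      obtain ⟨x, _, rfl⟩ := hr
      exact Nat.mod_lt _ hd
    · rw [Finset.card_image_of_injOn, Finset.card_range]
      intro x hx x' hx' hxx'
      simp only [Finset.coe_range, Set.mem_Iio] at hx hx'
      have h1 : a₁ * x ≡ a₁ * x' [MOD d] := hxx'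
      have h2 : x ≡ x' [MOD d] := h1.cancel_left_of_coprime (by
        rwa [Nat.coprime_comm] at hcop)
      have h3 : x % d = x' % d := h2
      rw [Nat.mod_eq_of_lt hx, Nat.mod_eq_of_lt hx'] at h3
      exact h3
  have hinj : Set.InjOn (fun x => a₁ * x % d) (Finset.range d) := by
    intro x hx x' hx' hxx'
    simp only [Finset.coe_range, Set.mem_Iio] at hx hx'
    have h1 : a₁ * x ≡ a₁ * x' [MOD d] := hxx'
    have h2 : x ≡ x' [MOD d] := h1.cancel_left_of_coprime (by
      rwa [Nat.coprime_comm] at hcop)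
    have h3 : x % d = x' % d := h2
    rwa [Nat.mod_eq_of_lt hx, Nat.mod_eq_of_lt hx'] at h3
  have hressum : ∑ x ∈ Finset.range d, (a₁ * x % d) = T := by
    rw [hT]
    calc ∑ x ∈ Finset.range d, (a₁ * x % d)
        = ∑ r ∈ (Finset.range d).image (fun x => a₁ * x % d), r := by
          rw [Finset.sum_image (fun x hx x' hx' h => hinj hx hx' h)]
      _ = ∑ x ∈ Finset.range d, x := by rw [himg]
  have h6 : a₁ * T = d * S + T := by
    calc a₁ * T = ∑ x ∈ Finset.range d, a₁ * x := by rw [hT, Finset.mul_sum]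
      _ = ∑ x ∈ Finset.range d, (d * (a₁ * x / d) + a₁ * x % d) :=
          Finset.sum_congr rfl fun x _ => (Nat.div_add_mod (a₁ * x) d).symm
      _ = d * S + T := by rw [Finset.sum_add_distrib, ← Finset.mul_sum, hressum]
  have h2T : 2 * T = d * (d - 1) := by
    rw [hT, ← Finset.sum_range_id_mul_two d, mul_comm]
  obtain ⟨e, rfl⟩ : ∃ e, d = e + 1 := ⟨d - 1, by omega⟩
  obtain ⟨a', rfl⟩ : ∃ a', a₁ = a' + 1 := ⟨a₁ - 1, by omega⟩
  simp only [Nat.add_sub_cancel] at h2T ⊢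
  have ha' : a' * T = (e + 1) * S := by
    have := h6
    rw [Nat.succ_mul] at this
    omega
  have hc : (e + 1) * (2 * S) = (e + 1) * (e * a') :=
    calc (e + 1) * (2 * S) = 2 * ((e + 1) * S) := by ring
      _ = 2 * (a' * T) := by rw [ha']
      _ = a' * (2 * T) := by ring
      _ = a' * ((e + 1) * e) := by rw [h2T]
      _ = (e + 1) * (e * a') := by ring
  exact Nat.eq_of_mul_eq_mul_left (Nat.succ_pos e) hc



lemma x0_eq_of_cast {d a₁ : ℕ} (hd : 0 < d) (hcop : Nat.Coprime a₁ d) {n x₀ : ℕ}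
    (hx₀ : x₀ < d) (hcast : ((n : ℕ) : ZMod d) = ((a₁ * x₀ : ℕ) : ZMod d)) :
    x0 d a₁ n = x₀ := by
  haveI : NeZero d := ⟨hd.ne'⟩
  unfold x0
  rw [hcast]
  push_cast
  rw [show (a₁ : ZMod d) * (x₀ : ZMod d) * (a₁ : ZMod d)⁻¹
    = (x₀ : ZMod d) * ((a₁ : ZMod d) * (a₁ : ZMod d)⁻¹) by ring,
    ZMod.coe_mul_inv_eq_one a₁ hcop, mul_one]
  exact ZMod.val_cast_of_lt hx₀

lemma F_count {d a₁ : ℕ} (hd : 0 < d) (ha₁ : 0 < a₁) (hcop : Nat.Coprime a₁ d) :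
    2 * Set.ncard {n : ℕ | n < a₁ * x0 d a₁ n} = (d - 1) * (a₁ - 1) := by
  set ψ : ℕ × ℕ → ℕ := fun q => a₁ * q.1 - d * (q.2 + 1) with hψ
  set T : Finset (ℕ × ℕ) :=
    (Finset.range d ×ˢ Finset.range a₁).filter (fun q => d * (q.2 + 1) ≤ a₁ * q.1) with hTdef
  have hmemT : ∀ x₀ t : ℕ, (x₀, t) ∈ T ↔ x₀ < d ∧ t < a₁ ∧ d * (t + 1) ≤ a₁ * x₀ := by
    intro x₀ t
    simp only [hTdef, Finset.mem_filter, Finset.mem_product, Finset.mem_range]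
    tauto
  have hψq : ∀ x₀ t : ℕ, ψ (x₀, t) = a₁ * x₀ - d * (t + 1) := fun _ _ => rfl
  have hx0ψ : ∀ x₀ t : ℕ, (x₀, t) ∈ T → x0 d a₁ (ψ (x₀, t)) = x₀ ∧ ψ (x₀, t) < a₁ * x₀ := by
    intro x₀ t hq
    rw [hmemT] at hq
    obtain ⟨h1, h2, h3⟩ := hq
    have hpos : 0 < d * (t + 1) := by positivity
    have hlt : ψ (x₀, t) < a₁ * x₀ := by rw [hψq]; omega
    have hcast : ((ψ (x₀, t) : ℕ) : ZMod d) = ((a₁ * x₀ : ℕ) : ZMod d) := by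
      rw [hψq, Nat.cast_sub h3]
      push_cast [ZMod.natCast_self]
      ring
    exact ⟨x0_eq_of_cast hd hcop h1 hcast, hlt⟩
  have hFeq : {n : ℕ | n < a₁ * x0 d a₁ n} = ψ '' ↑T := by
    ext n
    simp only [Set.mem_setOf_eq, Set.mem_image, Finset.mem_coe, Prod.exists]
    constructor
    · intro hn
      set x₀ := x0 d a₁ n with hx₀def
      have hx₀lt : x₀ < d := x0_lt hd a₁ n
      have hdvd : d ∣ a₁ * x₀ - n := by
        rw [← ZMod.natCast_eq_zero_iff, Nat.cast_sub (le_of_lt hn),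
          x0_cast hd hcop n]
        ring
      obtain ⟨s, hs⟩ := hdvd
      have hs1 : 1 ≤ s := by
        rcases Nat.eq_zero_or_pos s with h | h
        · exfalso; rw [h, mul_zero] at hs; omega
        · exact h
      have hsa : s < a₁ := by
        have hle : d * s ≤ a₁ * x₀ := by omega
        have hxd : a₁ * x₀ < a₁ * d := Nat.mul_lt_mul_of_pos_left hx₀lt ha₁
        by_contra hcon
        push_neg at hcon
        have hmul : d * a₁ ≤ d * s := Nat.mul_le_mul_left d hcon
        have hcomm : d * a₁ = a₁ * d := Nat.mul_comm d a₁
        omega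
      refine ⟨x₀, s - 1, ?_, ?_⟩
      · rw [hmemT]
        refine ⟨hx₀lt, by omega, ?_⟩
        rw [show s - 1 + 1 = s by omega]
        omega
      · rw [hψq, show s - 1 + 1 = s by omega]
        omega
    · rintro ⟨x₀, t, hq, rfl⟩
      obtain ⟨he, hlt⟩ := hx0ψ x₀ t hq
      rw [he]
      exact hlt
  have hinj : Set.InjOn ψ ↑T := by
    rintro ⟨x₀, t⟩ hq ⟨x₀', t'⟩ hq' heq
    simp only [Finset.mem_coe] at hq hq'
    have hx : x₀ = x₀' := by
      have ha := (hx0ψ x₀ t hq).1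
      have hb := (hx0ψ x₀' t' hq').1
      rw [← heq] at hb
      rw [ha] at hb
      exact hb
    subst hx
    rw [hmemT] at hq hq'
    have h3 := hq.2.2
    have h3' := hq'.2.2
    have heq' : a₁ * x₀ - d * (t + 1) = a₁ * x₀ - d * (t' + 1) := by
      rw [← hψq, ← hψq]; exact heq
    have ht : d * (t + 1) = d * (t' + 1) := by omega
    have : t + 1 = t' + 1 := Nat.eq_of_mul_eq_mul_left hd ht
    have : t = t' := by omega
    rw [this]
  have hcardT : T.card = ∑ x₀ ∈ Finset.range d, (a₁ * x₀ / d) := by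
    rw [hTdef, Finset.card_filter, Finset.sum_product]
    refine Finset.sum_congr rfl fun x₀ hx₀ => ?_
    rw [← Finset.card_filter]
    have hfil : (Finset.range a₁).filter (fun t => d * (t + 1) ≤ a₁ * x₀)
        = Finset.range (a₁ * x₀ / d) := by
      ext t
      simp only [Finset.mem_filter, Finset.mem_range]
      constructor
      · rintro ⟨ht, hdt⟩
        have : t + 1 ≤ a₁ * x₀ / d :=
          (Nat.le_div_iff_mul_le hd).mpr (by rw [Nat.mul_comm]; exact hdt)
        omega
      · intro ht
        have h1 : t + 1 ≤ a₁ * x₀ / d := by omega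
        have h2 : (t + 1) * d ≤ a₁ * x₀ := (Nat.le_div_iff_mul_le hd).mp h1
        have hcomm : (t + 1) * d = d * (t + 1) := Nat.mul_comm _ _
        have hx₀d : x₀ < d := Finset.mem_range.mp hx₀
        have h3 : a₁ * x₀ / d ≤ a₁ * d / d :=
          Nat.div_le_div_right (Nat.mul_le_mul_left a₁ (le_of_lt hx₀d))
        rw [Nat.mul_div_left a₁ hd] at h3
        exact ⟨by omega, by omega⟩
    rw [hfil, Finset.card_range]
  rw [hFeq, Set.ncard_image_of_injOn hinj, Set.ncard_coe_finset, hcardT]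
  exact sum_floor_div hd ha₁ hcop

theorem stmt_13 (k p a₁ : ℕ) (b : Fin k → ℕ) (ha₁ : 0 < a₁) (hb : ∀ i, 0 < b i)
    (hgcd : Nat.gcd a₁ (Finset.univ.gcd b) = 1)
    (hmin₁ : a₁ ∉ AddSubmonoid.closure (Set.range b))
    (hminb : ∀ i, b i ∉ AddSubmonoid.closure ({a₁} ∪ b '' {j | j ≠ i})) :
    2 * Set.ncard {n : ℕ | n ∉ Sp' p a₁ b} =
      2 * Finset.univ.gcd b *
          Set.ncard {n : ℕ | n ∉ Sp' p a₁ (fun i => b i / Finset.univ.gcd b)} +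
        (Finset.univ.gcd b - 1) * (a₁ - 1) := by
  rcases Nat.eq_zero_or_pos k with hk | hk
  · -- k = 0 : gcd b = 0 and a₁ = 1
    subst hk
    have hd0 : Finset.univ.gcd b = 0 := by simp
    have ha1 : a₁ = 1 := by rw [hd0] at hgcd; simpa using hgcd
    subst ha1
    have hrep : ∀ n, numRep' 1 b n = 1 := by
      intro n
      unfold numRep'
      have : {xy : ℕ × (Fin 0 → ℕ) | 1 * xy.1 + ∑ i, b i * xy.2 i = n}
          = {(n, fun i => i.elim0)} := by
        ext ⟨x, y⟩
        simp only [Set.mem_setOf_eq, Set.mem_singleton_iff, Prod.mk.injEq]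
        constructor
        · intro h
          refine ⟨by simpa using h, funext fun i => i.elim0⟩
        · rintro ⟨rfl, rfl⟩
          simp
      rw [this, Set.ncard_singleton]
    rw [hd0]
    simp only [Nat.zero_sub, zero_mul, mul_zero, zero_mul, add_zero]
    have : {n : ℕ | n ∉ Sp' p 1 b} = if p = 0 then (∅ : Set ℕ) else Set.univ := by
      split_ifs with hp
      · subst hp
        ext n; simp [Sp', hrep]
      · ext n; simp [Sp', hrep]; omega
    rw [this]
    split_ifs with hp
    · simp
    · rw [Set.Infinite.ncard Set.infinite_univ]
      ring
  · -- main case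
    set d := Finset.univ.gcd b with hddef
    have hdvd : ∀ i, d ∣ b i := fun i => Finset.gcd_dvd (Finset.mem_univ i)
    set i₀ : Fin k := ⟨0, hk⟩ with hi₀
    have hd : 0 < d := by
      rcases Nat.eq_zero_or_pos d with h | h
      · exfalso
        have := hdvd i₀
        rw [h] at this
        have := Nat.eq_zero_of_zero_dvd this
        have := hb i₀
        omega
      · exact h
    have hcop : Nat.Coprime a₁ d := hgcd
    set c : Fin k → ℕ := fun i => b i / d with hcdef
    have hc : ∀ i, 0 < c i := fun i => Nat.div_pos (Nat.le_of_dvd (hb i) (hdvd i)) hd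
    have hbc : ∀ i, b i = d * c i := fun i => (Nat.mul_div_cancel' (hdvd i)).symm
    have hgcdc : Finset.univ.gcd c = 1 := by
      have h1 : Finset.univ.gcd b = d * Finset.univ.gcd c := by
        calc Finset.univ.gcd b = Finset.univ.gcd (fun i => d * c i) := by
              refine Finset.gcd_congr rfl fun i _ => hbc i
          _ = d * Finset.univ.gcd c := by
              rw [Finset.gcd_mul_left]
              simp
      rw [← hddef] at h1
      have : d * 1 = d * Finset.univ.gcd c := by omega
      exact (Nat.eq_of_mul_eq_mul_left hd this).symm
    have hcopc : Nat.Coprime a₁ (Finset.univ.gcd c) := by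
      rw [hgcdc]; exact Nat.coprime_one_right a₁
    have hg'fin : {n : ℕ | ¬ p < numRep' a₁ c n}.Finite :=
      gaps_finite p a₁ hk ha₁ c hc hcopc
    set F : Set ℕ := {n : ℕ | n < a₁ * x0 d a₁ n} with hFdef
    set G : Set ℕ := (fun q : ℕ × ℕ => d * q.2 + a₁ * q.1) ''
      ((Set.Iio d) ×ˢ {n : ℕ | ¬ p < numRep' a₁ c n}) with hGdef
    have hgapc : {n : ℕ | n ∉ Sp' p a₁ (fun i => b i / d)} = {n : ℕ | ¬ p < numRep' a₁ c n} := by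
      ext n; simp [Sp', hcdef]
    have hset : {n : ℕ | n ∉ Sp' p a₁ b} = F ∪ G := by
      ext n
      simp only [Sp', Set.mem_setOf_eq, Set.mem_union, hFdef, hGdef, Set.mem_image,
        Set.mem_prod, Set.mem_Iio, Prod.exists]
      constructor
      · intro hn
        by_cases hlt : n < a₁ * x0 d a₁ n
        · exact Or.inl hlt
        · right
          push_neg at hlt
          have hdvd2 : d ∣ n - a₁ * x0 d a₁ n := by
            rw [← ZMod.natCast_eq_zero_iff, Nat.cast_sub hlt, x0_cast hd hcop n]
            ring
          have hmd := Nat.mul_div_cancel' hdvd2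
          set m := (n - a₁ * x0 d a₁ n) / d with hmdef
          have hm : n = d * m + a₁ * x0 d a₁ n := by omega
          refine ⟨x0 d a₁ n, m, ⟨x0_lt hd a₁ n, ?_⟩, hm.symm⟩
          rw [← numRep_scale hd hcop hdvd m (x0 d a₁ n) (x0_lt hd a₁ n), ← hm]
          exact hn
      · rintro (hlt | ⟨x₀, m, ⟨hx₀, hm⟩, rfl⟩)
        · rw [numRep_zero hd hcop hdvd hlt]
          omega
        · rw [numRep_scale hd hcop hdvd m x₀ hx₀]
          exact hm
    have hdisj : Disjoint F G := by
      rw [Set.disjoint_left]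
      rintro n hF hG
      rw [hGdef] at hG
      obtain ⟨⟨x₀, m⟩, ⟨hx₀, _⟩, rfl⟩ := hG
      simp only [Set.mem_Iio] at hx₀
      rw [hFdef, Set.mem_setOf_eq] at hF
      have hF' : d * m + a₁ * x₀ < a₁ * x0 d a₁ (d * m + a₁ * x₀) := hF
      rw [x0_of hd hcop m x₀ hx₀] at hF'
      omega
    have hFfin : F.Finite := by
      apply Set.Finite.subset (Set.finite_Iio (a₁ * d))
      intro n hn
      rw [hFdef, Set.mem_setOf_eq] at hn
      have h1 : a₁ * x0 d a₁ n < a₁ * d :=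
        Nat.mul_lt_mul_of_pos_left (x0_lt hd a₁ n) ha₁
      exact Set.mem_Iio.mpr (by omega)
    have hGfin : G.Finite := by
      rw [hGdef]
      exact (((Set.finite_Iio d).prod hg'fin).image _)
    have hGcard : G.ncard = d * Set.ncard {n : ℕ | ¬ p < numRep' a₁ c n} := by
      rw [hGdef]
      rw [Set.ncard_image_of_injOn]
      · have hprodeq : (Set.Iio d) ×ˢ {n : ℕ | ¬ p < numRep' a₁ c n}
            = ↑((Finset.range d) ×ˢ hg'fin.toFinset) := by
          rw [Finset.coe_product, Finset.coe_range, Set.Finite.coe_toFinset]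
        rw [hprodeq, Set.ncard_coe_finset, Finset.card_product, Finset.card_range]
        congr 1
        rw [← Set.ncard_coe_finset, Set.Finite.coe_toFinset]
      · rintro ⟨x₀, m⟩ ⟨hx₀, hm⟩ ⟨x₀', m'⟩ ⟨hx₀', hm'⟩ heq
        simp only [Set.mem_Iio] at hx₀ hx₀'
        simp only at heq
        have h1 : x₀ = x₀' := by
          have e1 := x0_of (a₁ := a₁) hd hcop m x₀ hx₀
          have e2 := x0_of (a₁ := a₁) hd hcop m' x₀' hx₀'
          rw [heq] at e1
          rw [← e1, e2]
        subst h1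
        have h2 : d * m = d * m' := by omega
        have : m = m' := Nat.eq_of_mul_eq_mul_left hd h2
        rw [this]
    rw [hset, Set.ncard_union_eq hdisj hFfin hGfin, hgapc, hGcard]
    have hF2 := F_count hd ha₁ hcop
    rw [← hFdef] at hF2
    set g := Set.ncard {n : ℕ | ¬ p < numRep' a₁ c n}
    calc 2 * (F.ncard + d * g) = 2 * F.ncard + 2 * d * g := by ring
      _ = (d - 1) * (a₁ - 1) + 2 * d * g := by rw [hF2]
      _ = 2 * d * g + (d - 1) * (a₁ - 1) := by ring
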